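/- For any positive integers k, l, M, the harmonic relation holds for *-truncated t-adic symmetric multiple zeta values in depth one: ζ*_{Ŝ,M}(k) · ζ*_{Ŝ,M}(l) = ζ*_{Ŝ,M}(k, l) + ζ*_{Ŝ,M}(l, k) + ζ*_{Ŝ,M}(k + l) in ℚ[[t]]. -/

import Mathlib

open PowerSeries


lemma sum_mul_sum_Ioo {R : Type*} [CommRing R] (f g : ℕ → R) (M : ℕ) :
    (∑ n ∈ Finset.Ioo 0 M, f n) * ∑ n ∈ Finset.Ioo 0 M, g n
      = (∑ n2 ∈ Finset.Ioo 0 M, ∑ n1 ∈ Finset.Ioo 0 n2, f n1 * g n2)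
        + (∑ n2 ∈ Finset.Ioo 0 M, ∑ n1 ∈ Finset.Ioo 0 n2, g n1 * f n2)
        + ∑ n ∈ Finset.Ioo 0 M, f n * g n := by
  induction M with
  | zero => simp
  | succ M ih =>
    rcases Nat.eq_zero_or_pos M with h | h
    · subst h; rw [show Finset.Ioo 0 1 = (∅ : Finset ℕ) from rfl]; simp
    · have hins : Finset.Ioo 0 (M + 1) = insert M (Finset.Ioo 0 M) := by
        ext x; simp; omega
      have hM : M ∉ Finset.Ioo 0 M := by simp
      rw [hins, Finset.sum_insert hM, Finset.sum_insert hM, Finset.sum_insert hM,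
        Finset.sum_insert hM, Finset.sum_insert hM]
      simp only [← Finset.sum_mul] at ih ⊢
      linear_combination ih

/-- Depth-one `*`-truncated t-adic symmetric MZV
`ζ*_{Ŝ,M}(k) = Σ_{0<n<M} 1/n^k + Σ_{-M<n<0} 1/(n+t)^k ∈ ℚ[[t]]`. -/
noncomputable def zetaHatStar1 (M k : ℕ) : PowerSeries ℚ :=
  (∑ n ∈ Finset.Ioo 0 M, C (1 / (n : ℚ) ^ k))
    + ∑ m ∈ Finset.Ioo 0 M, ((C (-(m : ℚ)) + X) ^ k)⁻¹

/-- Depth-two `*`-truncated t-adic symmetric MZV `ζ*_{Ŝ,M}(k,l)`: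
the sum of the terms `i = 2` (`0<n₁<n₂<M`), `i = 1` (`0<n₁<M`, `-M<n₂<0`) and
`i = 0` (`-M<n₁<n₂<0`), writing negative variables as `-m` with `0<m<M`. -/
noncomputable def zetaHatStar2 (M k l : ℕ) : PowerSeries ℚ :=
  (∑ n2 ∈ Finset.Ioo 0 M, ∑ n1 ∈ Finset.Ioo 0 n2,
      C (1 / ((n1 : ℚ) ^ k * (n2 : ℚ) ^ l)))
    + (∑ n1 ∈ Finset.Ioo 0 M, ∑ m2 ∈ Finset.Ioo 0 M,
        C (1 / (n1 : ℚ) ^ k) * ((C (-(m2 : ℚ)) + X) ^ l)⁻¹)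
    + (∑ m1 ∈ Finset.Ioo 0 M, ∑ m2 ∈ Finset.Ioo 0 m1,
        ((C (-(m1 : ℚ)) + X) ^ k)⁻¹ * ((C (-(m2 : ℚ)) + X) ^ l)⁻¹)

/-- Depth-one harmonic relation for `*`-truncated t-adic symmetric MZVs:
`ζ*_{Ŝ,M}(k) ζ*_{Ŝ,M}(l) = ζ*_{Ŝ,M}(k,l) + ζ*_{Ŝ,M}(l,k) + ζ*_{Ŝ,M}(k+l)`. -/
theorem stmt_7 (k l M : ℕ) (hk : 0 < k) (hl : 0 < l) (hM : 0 < M) :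
    zetaHatStar1 M k * zetaHatStar1 M l
      = zetaHatStar2 M k l + zetaHatStar2 M l k + zetaHatStar1 M (k + l) := by
  set fk : ℕ → PowerSeries ℚ := fun n => C (1 / (n : ℚ) ^ k) with hfk
  set fl : ℕ → PowerSeries ℚ := fun n => C (1 / (n : ℚ) ^ l) with hfl
  set gk : ℕ → PowerSeries ℚ := fun m => ((C (-(m : ℚ)) + X) ^ k)⁻¹ with hgk
  set gl : ℕ → PowerSeries ℚ := fun m => ((C (-(m : ℚ)) + X) ^ l)⁻¹ with hgl
  have hAA := sum_mul_sum_Ioo fk fl M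
  have hBB := sum_mul_sum_Ioo gk gl M
  have hAB := Finset.sum_mul_sum (Finset.Ioo 0 M) (Finset.Ioo 0 M) fk gl
  have hBA := Finset.sum_mul_sum (Finset.Ioo 0 M) (Finset.Ioo 0 M) fl gk
  -- pointwise identifications
  have ediagA : ∀ n : ℕ, fk n * fl n = C (1 / (n : ℚ) ^ (k + l)) := by
    intro n
    simp [hfk, hfl, ← map_mul, pow_add, one_div, mul_inv, mul_comm]
  have ediagB : ∀ m ∈ Finset.Ioo 0 M, gk m * gl m = ((C (-(m : ℚ)) + X) ^ (k + l))⁻¹ := by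
    intro m hm
    rw [pow_add, PowerSeries.mul_inv_rev, mul_comm]
  have eC : ∀ n1 n2 : ℕ, C (1 / ((n1 : ℚ) ^ k * (n2 : ℚ) ^ l)) = fk n1 * fl n2 := by
    intro n1 n2; simp [hfk, hfl, ← map_mul, one_div, mul_inv, mul_comm]
  have eC' : ∀ n1 n2 : ℕ, C (1 / ((n1 : ℚ) ^ l * (n2 : ℚ) ^ k)) = fl n1 * fk n2 := by
    intro n1 n2; simp [hfk, hfl, ← map_mul, one_div, mul_inv, mul_comm]
  unfold zetaHatStar1 zetaHatStar2
  simp only [show ∀ n : ℕ, C (1 / (n : ℚ) ^ k) = fk n from fun _ => rfl,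
    show ∀ n : ℕ, C (1 / (n : ℚ) ^ l) = fl n from fun _ => rfl,
    show ∀ m : ℕ, ((C (-(m : ℚ)) + X) ^ k)⁻¹ = gk m from fun _ => rfl,
    show ∀ m : ℕ, ((C (-(m : ℚ)) + X) ^ l)⁻¹ = gl m from fun _ => rfl]
  rw [← Finset.sum_congr rfl (fun n (_ : n ∈ Finset.Ioo 0 M) => ediagA n),
    ← Finset.sum_congr rfl ediagB,
    Finset.sum_congr rfl (fun n2 (_ : n2 ∈ Finset.Ioo 0 M) =>
      Finset.sum_congr rfl (fun n1 _ => eC n1 n2)),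
    Finset.sum_congr rfl (fun n2 (_ : n2 ∈ Finset.Ioo 0 M) =>
      Finset.sum_congr rfl (fun n1 _ => eC' n1 n2))]
  -- rewrite negative triangular sums to match hBB (mul_comm under binders)
  have eNkl : (∑ m1 ∈ Finset.Ioo 0 M, ∑ m2 ∈ Finset.Ioo 0 m1, gk m1 * gl m2)
      = ∑ m1 ∈ Finset.Ioo 0 M, ∑ m2 ∈ Finset.Ioo 0 m1, gl m2 * gk m1 := by
    refine Finset.sum_congr rfl fun m1 _ => Finset.sum_congr rfl fun m2 _ => mul_comm _ _
  have eNlk : (∑ m1 ∈ Finset.Ioo 0 M, ∑ m2 ∈ Finset.Ioo 0 m1, gl m1 * gk m2)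
      = ∑ m1 ∈ Finset.Ioo 0 M, ∑ m2 ∈ Finset.Ioo 0 m1, gk m2 * gl m1 := by
    refine Finset.sum_congr rfl fun m1 _ => Finset.sum_congr rfl fun m2 _ => mul_comm _ _
  rw [eNkl, eNlk]
  linear_combination hAA + hBB + hAB + hBA
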